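/- arXiv:1002.0518 — 3 statements merged into one kernel-verified Lean document; each statement's English description precedes it below -/
import Mathlib

section
/- Let G be an abelian group, k a field, Φ: G³ → kˣ, R: G² → kˣ satisfying R(f,gh) = R(f,g)R(f,h)·Φ(g,f,h)/(Φ(g,h,f)Φ(f,g,h)) and R(fg,h) = R(f,h)R(g,h)·Φ(h,f,g)Φ(f,g,h)/Φ(f,h,g) for all f,g,h ∈ G. Then for all f,g,h ∈ G: R(f,gh)·R(gh,f) = R(f,g)·R(g,f)·R(f,h)·R(h,f). -/
/-- The associator factors cancel: from (3.3) and (3.4) it follows that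
`B(g,h) := R(g,h)R(h,g)` is multiplicative in the second variable. -/
theorem stmt_4 (k : Type*) [Field k] (G : Type*) [CommGroup G]
    (Φ : G → G → G → kˣ) (R : G → G → kˣ)
    (h33 : ∀ f g h : G,
      R f (g * h) = R f g * R f h * Φ g f h / (Φ g h f * Φ f g h))
    (h34 : ∀ f g h : G,
      R (f * g) h = R f h * R g h * Φ h f g * Φ f g h / Φ f h g) :
    ∀ f g h : G,
      R f (g * h) * R (g * h) f = R f g * R g f * (R f h * R h f) := by
  intro f g h
  rw [h33 f g h, h34 g h f, Units.ext_iff]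
  push_cast
  field_simp
end

section
/- Let n > 1, q ∈ ℂ a primitive n-th root of unity, 0 ≤ s ≤ n-1, and Φ_s the 3-cocycle on ℤ/n given by Φ_s(i,j,k) = q^{s·i·(j+k-(j+k) mod n)/n}. Suppose R: ℤ/n × ℤ/n → ℂˣ satisfies R(g, a+b) = R(g,a)·R(g,b)·Φ_s(a,g,b)/(Φ_s(a,b,g)·Φ_s(g,a,b)) for all g,a,b, and R(g,g)² = 1 where g is a generator of ℤ/n. Then s = 0. -/
/-- The 3-cochain `Φ_s(i,j,k) = q^{s·i·(j+k-(j+k)')/n}` on `ℤ/n`. -/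
def PhiCyclic (n s : ℕ) (q : ℂ) (i j k : ZMod n) : ℂ :=
  q ^ (s * i.val * ((j.val + k.val - (j.val + k.val) % n) / n))

/-- If a nowhere-zero `R` satisfies the quasi-bicharacter identity (3.3) with
associator `Φ_s` and `R(g,g)² = 1` for the generator `g = 1`, then `s = 0`. -/
theorem stmt_6 (n : ℕ) (hn : 1 < n) (q : ℂ) (hq : IsPrimitiveRoot q n)
    (s : ℕ) (hs : s ≤ n - 1) (R : ZMod n → ZMod n → ℂ)
    (hR0 : ∀ a b : ZMod n, R a b ≠ 0)
    (h33 : ∀ g a b : ZMod n,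
      R g (a + b) = R g a * R g b * PhiCyclic n s q a g b /
        (PhiCyclic n s q a b g * PhiCyclic n s q g a b))
    (hsq : R 1 1 ^ 2 = 1) :
    s = 0 := by
  have hn0 : 0 < n := by omega
  haveI : NeZero n := ⟨by omega⟩
  haveI : Fact (1 < n) := ⟨hn⟩
  set c := R 1 1 with hc
  have hdiv : ∀ x : ℕ, (x - x % n) / n = x / n := by
    intro x
    have h := Nat.mod_add_div x n
    have h2 : x - x % n = n * (x / n) := by omega
    rw [h2, Nat.mul_div_cancel_left _ hn0]
  have hPhi : ∀ i j k : ZMod n,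
      PhiCyclic n s q i j k = q ^ (s * i.val * ((j.val + k.val) / n)) := by
    intro i j k; rw [PhiCyclic, hdiv]
  have hq0 : q ≠ 0 := hq.ne_zero (by omega)
  have hv1 : (1 : ZMod n).val = 1 := ZMod.val_one n
  have hR10 : R 1 0 = 1 := by
    have h := h33 1 0 0
    simp only [hPhi, ZMod.val_zero, hv1, Nat.zero_mul, Nat.mul_zero, zero_add, add_zero,
      Nat.zero_div, pow_zero, mul_one, one_mul, div_one] at h
    have := hR0 1 0
    have h' : R 1 0 * R 1 0 = R 1 0 * 1 := by rw [mul_one, ← h]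
    exact mul_left_cancel₀ this h'
  have key : ∀ m : ℕ, m < n → R 1 ((m : ZMod n)) = c ^ m := by
    intro m
    induction m with
    | zero => intro _; simpa using hR10
    | succ k ih =>
      intro hk
      have hkn : k < n := by omega
      have h := h33 1 (k : ZMod n) 1
      have hvk : ((k : ZMod n)).val = k := ZMod.val_cast_of_lt hkn
      simp only [hPhi, hvk, hv1] at h
      have hd : (k + 1) / n = 0 := Nat.div_eq_of_lt (by omega)
      rw [hd, Nat.mul_zero, pow_zero, mul_one, mul_div_assoc,
        div_self (pow_ne_zero _ hq0), mul_one] at h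
      have : ((k + 1 : ℕ) : ZMod n) = (k : ZMod n) + 1 := by push_cast; ring
      rw [this, h, ih hkn, pow_succ]
  have hfin : q ^ s = c ^ n := by
    have h := h33 1 ((n - 1 : ℕ) : ZMod n) 1
    have hv : (((n - 1 : ℕ)) : ZMod n).val = n - 1 := ZMod.val_cast_of_lt (by omega)
    simp only [hPhi, hv, hv1] at h
    have hd : (n - 1 + 1) / n = 1 := by
      rw [Nat.sub_add_cancel (by omega), Nat.div_self hn0]
    rw [hd, Nat.mul_one, Nat.mul_one] at h
    have h1 : ((n - 1 : ℕ) : ZMod n) + 1 = 0 := by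
      have : ((n - 1 : ℕ) : ZMod n) + 1 = ((n - 1 + 1 : ℕ) : ZMod n) := by push_cast; ring
      rw [this, Nat.sub_add_cancel (by omega), ZMod.natCast_self]
    rw [h1, hR10, key (n - 1) (by omega)] at h
    have hE0 : q ^ (s * (n - 1) * ((1 + 1) / n)) ≠ 0 := pow_ne_zero _ hq0
    have hqs0 : q ^ s ≠ 0 := pow_ne_zero _ hq0
    field_simp at h
    -- h : q ^ E * q ^ s = c ^ (n-1) * c * q ^ E  (up to arrangement)
    have hcn : c ^ (n - 1) * c = c ^ n := by
      rw [← pow_succ, Nat.sub_add_cancel (by omega)]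
    calc q ^ s = (q ^ (s * (n - 1) * ((1 + 1) / n)) * q ^ s) /
          q ^ (s * (n - 1) * ((1 + 1) / n)) := by
          rw [mul_comm, mul_div_assoc, div_self hE0, mul_one]
      _ = c ^ n := by rw [h, ← hcn]; field_simp; rfl
  have hc2 : c = 1 ∨ c = -1 := by
    have h0 : (c - 1) * (c + 1) = 0 := by linear_combination hsq
    rcases mul_eq_zero.mp h0 with h | h
    · left; linear_combination h
    · right; linear_combination h
  have hqs : q ^ s = 1 ∨ q ^ s = -1 := by
    rcases hc2 with h | h
    · left; rw [hfin, h, one_pow]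
    · rcases Nat.even_or_odd n with he | ho
      · left; rw [hfin, h, he.neg_one_pow]
      · right; rw [hfin, h, ho.neg_one_pow]
  rcases hqs with h | h
  · have hdvd := (hq.pow_eq_one_iff_dvd s).mp h
    exact Nat.eq_zero_of_dvd_of_lt hdvd (by omega)
  · have h2 : q ^ (2 * s) = 1 := by
      rw [two_mul, pow_add, h]; ring_nf
    have hdvd := (hq.pow_eq_one_iff_dvd _).mp h2
    rcases Nat.even_or_odd n with he | ho
    · exfalso
      have hcontra : (1 : ℂ) = -1 := by
        rcases hc2 with hc1 | hc1 <;> rw [← h, hfin, hc1] <;> simp [he.neg_one_pow]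
      norm_num at hcontra
    · have hcop : Nat.Coprime n 2 := by
        exact ho.coprime_two_right
      have hds : n ∣ s := hcop.dvd_of_dvd_mul_left hdvd
      have hs0 : s = 0 := Nat.eq_zero_of_dvd_of_lt hds (by omega)
      exfalso
      rw [hs0, pow_zero] at h
      norm_num at h
end

section
/- Let G be an abelian group, k a field, Φ: G³ → kˣ a normalized 3-cocycle, and R: G² → kˣ satisfying identities (3.3) and (3.4). Define B(g,h) := R(g,h)·R(h,g). Then B is a symmetric bicharacter on G: B(g,h) = B(h,g), B(f, gh) = B(f,g)·B(f,h), and B(fg, h) = B(f,h)·B(g,h) for all f,g,h ∈ G. -/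
/-- If `Φ` is a normalized 3-cocycle and `R` satisfies (3.3) and (3.4), then
`B(g,h) := R(g,h)·R(h,g)` is a symmetric bicharacter on `G`. -/
theorem stmt_14 (k : Type*) [Field k] (G : Type*) [CommGroup G]
    (Φ : G → G → G → kˣ) (R : G → G → kˣ)
    (hcoc : ∀ a b c d : G, Φ b c d * Φ a (b * c) d * Φ a b c = Φ (a * b) c d * Φ a b (c * d))
    (hnorm1 : ∀ y z : G, Φ 1 y z = 1)
    (hnorm2 : ∀ x z : G, Φ x 1 z = 1)
    (hnorm3 : ∀ x y : G, Φ x y 1 = 1)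
    (h33 : ∀ f g h : G,
      R f (g * h) = R f g * R f h * Φ g f h / (Φ g h f * Φ f g h))
    (h34 : ∀ f g h : G,
      R (f * g) h = R f h * R g h * Φ h f g * Φ f g h / Φ f h g) :
    (∀ g h : G, R g h * R h g = R h g * R g h) ∧
    (∀ f g h : G, R f (g * h) * R (g * h) f = (R f g * R g f) * (R f h * R h f)) ∧
    (∀ f g h : G, R (f * g) h * R h (f * g) = (R f h * R h f) * (R g h * R h g)) := by
  refine ⟨fun g h => mul_comm _ _, fun f g h => ?_, fun f g h => ?_⟩
  · rw [h33 f g h, h34 g h f]; rw [Units.ext_iff]; push_cast; field_simp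
  · rw [h34 f g h, h33 h f g]; rw [Units.ext_iff]; push_cast; field_simp
end
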